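/- Let S be a finite set, and let π₀, π₁ : ℝ × S → ℝ be nonnegative joint densities with π₀(a,s) > 0 for all (a,s), each integrating to 1 (∑_{s} ∫_ℝ πᵢ(a,s) da = 1). Define ρ(a,s) = π₁(a,s)/π₀(a,s), let t : S → ℝ be a deterministic target policy, let r : ℝ × S → ℝ with r ≥ 0, let ρ̂ : ℝ × S → ℝ, and let B : ℝ × S → ℝ with B ≥ 0 and |ρ̂(a,s) − ρ(a,s)| ≤ B(a,s) for all (a,s). Suppose for each s ∈ S: a ↦ r(a,s)·π₁(a,s) is twice differentiable with |second derivative| ≤ M₁ and a ↦ B(a,s)·r(a,s)·π₀(a,s) is twice differentiable with |second derivative| ≤ M₂. Let K : ℝ → ℝ be nonnegative and integrable with ∫ K = 1, ∫ u·K(u) du = 0, and κ₂ := ∫ u²·K(u) du < ∞. Then for every h > 0, |∑_{s∈S} (1/h)·∫_ℝ K((a − t(s))/h)·ρ̂(a,s)·r(a,s)·π₀(a,s) da − ∑_{s∈S} r(t(s),s)·π₁(t(s),s)| ≤ ∑_{s∈S} B(t(s),s)·r(t(s),s)·π₀(t(s),s) + |S|·((M₁ + M₂)·κ₂/2)·h².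 -/

import Mathlib

open MeasureTheory

private lemma quad_dom {g G : ℝ → ℝ} {M x : ℝ}
    (hg : ∀ z, HasDerivAt g (G z) z) (hgx : g x = 0)
    (hG : ∀ z, |G z| ≤ M * |z - x|) (y : ℝ) :
    g y ≤ M / 2 * (y - x) ^ 2 := by
  set p : ℝ → ℝ := fun z => M / 2 * (z - x) ^ 2 - g z with hpdef
  have hp' : ∀ z, HasDerivAt p (M * (z - x) - G z) z := by
    intro z
    have h1 : HasDerivAt (fun z : ℝ => M / 2 * (z - x) ^ 2) (M * (z - x)) z := by
      have := (((hasDerivAt_id z).sub_const x).pow 2).const_mul (M / 2)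
      refine HasDerivAt.congr_deriv this ?_
      simp only [id_eq]; push_cast; ring
    exact h1.sub (hg z)
  have hpx : p x = 0 := by simp [hpdef, hgx]
  rcases le_total x y with hxy | hxy
  · have mono : MonotoneOn p (Set.Ici x) := by
      apply monotoneOn_of_deriv_nonneg (convex_Ici x)
      · exact fun z _ => ((hp' z).differentiableAt).continuousAt.continuousWithinAt
      · exact fun z _ => ((hp' z).differentiableAt).differentiableWithinAt
      · intro z hz
        rw [interior_Ici] at hz
        rw [(hp' z).deriv]
        have h2 := (abs_le.mp (hG z)).2
        have h3 : |z - x| = z - x := abs_of_pos (sub_pos.mpr hz)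
        rw [h3] at h2
        linarith
    have := mono Set.self_mem_Ici hxy hxy
    rw [hpx] at this
    have hpy : p y = M / 2 * (y - x) ^ 2 - g y := rfl
    linarith [this, hpy ▸ this]
  · have anti : AntitoneOn p (Set.Iic x) := by
      apply antitoneOn_of_deriv_nonpos (convex_Iic x)
      · exact fun z _ => ((hp' z).differentiableAt).continuousAt.continuousWithinAt
      · exact fun z _ => ((hp' z).differentiableAt).differentiableWithinAt
      · intro z hz
        rw [interior_Iic] at hz
        rw [(hp' z).deriv]
        have h2 := (abs_le.mp (hG z)).1
        have h3 : |z - x| = -(z - x) := abs_of_neg (sub_neg.mpr hz)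
        rw [h3] at h2
        linarith
    have := anti hxy Set.self_mem_Iic hxy
    rw [hpx] at this
    have hpy : p y = M / 2 * (y - x) ^ 2 - g y := rfl
    linarith [this, hpy ▸ this]

private lemma taylor_quad {f : ℝ → ℝ} {M : ℝ}
    (hd : ∀ x, DifferentiableAt ℝ f x) (hd' : ∀ x, DifferentiableAt ℝ (deriv f) x)
    (hM : ∀ x, |deriv (deriv f) x| ≤ M) (x y : ℝ) :
    |f y - f x - deriv f x * (y - x)| ≤ M * (y - x) ^ 2 / 2 := by
  have hM0 : 0 ≤ M := le_trans (abs_nonneg _) (hM x)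
  have hlip : ∀ z, |deriv f z - deriv f x| ≤ M * |z - x| := by
    intro z
    have hL : LipschitzWith M.toNNReal (deriv f) := by
      apply lipschitzWith_of_nnnorm_deriv_le (fun z => hd' z)
      intro z
      rw [← NNReal.coe_le_coe, coe_nnnorm, Real.coe_toNNReal _ hM0, Real.norm_eq_abs]
      exact hM z
    have := hL.dist_le_mul z x
    rwa [Real.dist_eq, Real.dist_eq, Real.coe_toNNReal _ hM0] at this
  set g : ℝ → ℝ := fun z => f z - f x - deriv f x * (z - x) with hgdef
  have hg : ∀ z, HasDerivAt g (deriv f z - deriv f x) z := by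
    intro z
    have h1 : HasDerivAt (fun z : ℝ => f x + deriv f x * (z - x)) (deriv f x) z := by
      have := (((hasDerivAt_id z).sub_const x).const_mul (deriv f x)).const_add (f x)
      simpa using this
    have h2 := (hd z).hasDerivAt.sub h1
    refine h2.congr_of_eventuallyEq (Filter.Eventually.of_forall fun w => ?_)
    simp only [hgdef, Pi.sub_apply]; ring
  have hgx : g x = 0 := by simp [hgdef]
  have hup : g y ≤ M / 2 * (y - x) ^ 2 := quad_dom hg hgx hlip y
  have hdn : -g y ≤ M / 2 * (y - x) ^ 2 := by
    have hgneg : ∀ z, HasDerivAt (fun z => -g z) (-(deriv f z - deriv f x)) z :=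
      fun z => (hg z).neg
    have := quad_dom (x := x) hgneg (by simp [hgx]) (fun z => by rw [abs_neg]; exact hlip z) y
    simpa using this
  have : |g y| ≤ M / 2 * (y - x) ^ 2 := abs_le.mpr ⟨by linarith, hup⟩
  calc |f y - f x - deriv f x * (y - x)| = |g y| := rfl
    _ ≤ M / 2 * (y - x) ^ 2 := this
    _ = M * (y - x) ^ 2 / 2 := by ring

private lemma kernel_taylor
    (K : ℝ → ℝ) (hKnonneg : ∀ u, 0 ≤ K u) (hKint : Integrable K) (hK1 : ∫ u, K u = 1)
    (hKu : Integrable (fun u => u * K u)) (hKu0 : ∫ u, u * K u = 0)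
    (hKu2 : Integrable (fun u => u ^ 2 * K u))
    (φ : ℝ → ℝ) (hφ0 : ∀ a, 0 ≤ φ a) (M : ℝ)
    (hd : ∀ x, DifferentiableAt ℝ φ x) (hd' : ∀ x, DifferentiableAt ℝ (deriv φ) x)
    (hM : ∀ x, |deriv (deriv φ) x| ≤ M)
    (t h : ℝ) (hh : 0 < h) :
    Integrable (fun u => K u * φ (t + h * u)) ∧
      |(∫ u, K u * φ (t + h * u)) - φ t| ≤ M * h ^ 2 / 2 * ∫ u, u ^ 2 * K u := by
  have T : ∀ u : ℝ, |φ (t + h * u) - φ t - deriv φ t * (h * u)| ≤ M * (h * u) ^ 2 / 2 := by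
    intro u
    have := taylor_quad hd hd' hM t (t + h * u)
    simpa using this
  have IabsU : Integrable (fun u : ℝ => |u| * K u) := by
    refine hKu.abs.congr (Filter.Eventually.of_forall fun u => ?_)
    show |u * K u| = |u| * K u
    rw [abs_mul, abs_of_nonneg (hKnonneg u)]
  have hφc : Continuous φ := by
    rw [continuous_iff_continuousAt]; exact fun x => (hd x).continuousAt
  have hmeasφ : AEStronglyMeasurable (fun u => K u * φ (t + h * u)) volume :=
    hKint.aestronglyMeasurable.mul
      ((hφc.comp (continuous_const.add (continuous_const.mul continuous_id))).aestronglyMeasurable)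
  have hptw : ∀ u : ℝ, φ (t + h * u) ≤ φ t + (|deriv φ t| * h) * |u| + (M * h ^ 2 / 2) * u ^ 2 := by
    intro u
    have h1 := (abs_le.mp (T u)).2
    have h2 : deriv φ t * (h * u) ≤ |deriv φ t| * h * |u| := by
      calc deriv φ t * (h * u) ≤ |deriv φ t * (h * u)| := le_abs_self _
        _ = |deriv φ t| * h * |u| := by
            rw [abs_mul, abs_mul, abs_of_pos hh]; ring
    have h3 : (h * u) ^ 2 = h ^ 2 * u ^ 2 := by ring
    rw [h3] at h1
    linarith
  have Idom : Integrable (fun u : ℝ => φ t * K u + (|deriv φ t| * h) * (|u| * K u)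
      + (M * h ^ 2 / 2) * (u ^ 2 * K u)) :=
    ((hKint.const_mul (φ t)).add (IabsU.const_mul _)).add (hKu2.const_mul _)
  have Iφ : Integrable (fun u => K u * φ (t + h * u)) := by
    refine Idom.mono' hmeasφ (Filter.Eventually.of_forall fun u => ?_)
    rw [Real.norm_eq_abs, abs_mul, abs_of_nonneg (hKnonneg u), abs_of_nonneg (hφ0 _)]
    calc K u * φ (t + h * u)
        ≤ K u * (φ t + (|deriv φ t| * h) * |u| + (M * h ^ 2 / 2) * u ^ 2) :=
          mul_le_mul_of_nonneg_left (hptw u) (hKnonneg u)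
      _ = φ t * K u + (|deriv φ t| * h) * (|u| * K u) + (M * h ^ 2 / 2) * (u ^ 2 * K u) := by
          ring
  refine ⟨Iφ, ?_⟩
  have I1 : Integrable (fun u => K u * φ (t + h * u) - K u * φ t) volume :=
    Iφ.sub (hKint.mul_const (φ t))
  have I2 : Integrable (fun u : ℝ => deriv φ t * h * (u * K u)) volume :=
    hKu.const_mul (deriv φ t * h)
  have IR : Integrable (fun u => K u * (φ (t + h * u) - φ t - deriv φ t * (h * u))) := by
    refine (I1.sub I2).congr (Filter.Eventually.of_forall fun u => ?_)
    show K u * φ (t + h * u) - K u * φ t - deriv φ t * h * (u * K u)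
        = K u * (φ (t + h * u) - φ t - deriv φ t * (h * u))
    ring
  have heq : (∫ u, K u * φ (t + h * u)) - φ t
      = ∫ u, K u * (φ (t + h * u) - φ t - deriv φ t * (h * u)) := by
    have e : (fun u => K u * (φ (t + h * u) - φ t - deriv φ t * (h * u)))
        = fun u => (K u * φ (t + h * u) - K u * φ t) - (deriv φ t * h) * (u * K u) :=
      funext fun u => by ring
    rw [e, integral_sub I1 I2, integral_sub Iφ (hKint.mul_const _),
      integral_mul_const, integral_const_mul, hK1, hKu0]
    ring
  rw [heq]
  calc |∫ u, K u * (φ (t + h * u) - φ t - deriv φ t * (h * u))|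
      ≤ ∫ u, |K u * (φ (t + h * u) - φ t - deriv φ t * (h * u))| := by
        have := norm_integral_le_integral_norm (μ := volume)
          (fun u => K u * (φ (t + h * u) - φ t - deriv φ t * (h * u)))
        simp only [Real.norm_eq_abs] at this
        exact this
    _ ≤ ∫ u, (M * h ^ 2 / 2) * (u ^ 2 * K u) := by
        refine integral_mono IR.abs (hKu2.const_mul _) fun u => ?_
        rw [abs_mul, abs_of_nonneg (hKnonneg u)]
        calc K u * |φ (t + h * u) - φ t - deriv φ t * (h * u)|
            ≤ K u * (M * (h * u) ^ 2 / 2) := mul_le_mul_of_nonneg_left (T u) (hKnonneg u)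
          _ = (M * h ^ 2 / 2) * (u ^ 2 * K u) := by ring
    _ = M * h ^ 2 / 2 * ∫ u, u ^ 2 * K u := integral_const_mul _ _

private lemma key_est
    (K : ℝ → ℝ) (hKnonneg : ∀ u, 0 ≤ K u) (hKint : Integrable K) (hK1 : ∫ u, K u = 1)
    (hKu : Integrable (fun u => u * K u)) (hKu0 : ∫ u, u * K u = 0)
    (hKu2 : Integrable (fun u => u ^ 2 * K u))
    (g f₁ f₂ : ℝ → ℝ) (hgmeas : Measurable g)
    (hf10 : ∀ a, 0 ≤ f₁ a) (hf20 : ∀ a, 0 ≤ f₂ a)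
    (hbound : ∀ a, |g a - f₁ a| ≤ f₂ a)
    (M1 M2 : ℝ)
    (hd1 : ∀ x, DifferentiableAt ℝ f₁ x) (hd1' : ∀ x, DifferentiableAt ℝ (deriv f₁) x)
    (hM1 : ∀ x, |deriv (deriv f₁) x| ≤ M1)
    (hd2 : ∀ x, DifferentiableAt ℝ f₂ x) (hd2' : ∀ x, DifferentiableAt ℝ (deriv f₂) x)
    (hM2 : ∀ x, |deriv (deriv f₂) x| ≤ M2)
    (t h : ℝ) (hh : 0 < h) :
    |(1 / h) * (∫ a, K ((a - t) / h) * g a) - f₁ t|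
      ≤ f₂ t + (M1 + M2) * (∫ u, u ^ 2 * K u) / 2 * h ^ 2 := by
  obtain ⟨If1, Hf1⟩ := kernel_taylor K hKnonneg hKint hK1 hKu hKu0 hKu2 f₁ hf10 M1
    hd1 hd1' hM1 t h hh
  obtain ⟨If2, Hf2⟩ := kernel_taylor K hKnonneg hKint hK1 hKu hKu0 hKu2 f₂ hf20 M2
    hd2 hd2' hM2 t h hh
  have habs : ∀ a, |g a| ≤ f₁ a + f₂ a := by
    intro a
    calc |g a| = |(g a - f₁ a) + f₁ a| := by rw [sub_add_cancel]
      _ ≤ |g a - f₁ a| + |f₁ a| := abs_add_le _ _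
      _ ≤ f₂ a + f₁ a := add_le_add (hbound a) (le_of_eq (abs_of_nonneg (hf10 a)))
      _ = f₁ a + f₂ a := by ring
  have Ig : Integrable (fun u => K u * g (t + h * u)) := by
    refine (If1.add If2).mono' ?_ (Filter.Eventually.of_forall fun u => ?_)
    · exact hKint.aestronglyMeasurable.mul
        ((hgmeas.comp ((measurable_id.const_mul h).const_add t)).aestronglyMeasurable)
    · rw [Real.norm_eq_abs, abs_mul, abs_of_nonneg (hKnonneg u)]
      calc K u * |g (t + h * u)| ≤ K u * (f₁ (t + h * u) + f₂ (t + h * u)) :=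
            mul_le_mul_of_nonneg_left (habs _) (hKnonneg u)
        _ = K u * f₁ (t + h * u) + K u * f₂ (t + h * u) := by ring
  -- change of variables
  have step1 : (∫ a, K ((a - t) / h) * g a) = h * ∫ u, K u * g (t + h * u) := by
    have e1 : (∫ a, K ((a - t) / h) * g a) = ∫ v, K (v / h) * g (v + t) := by
      rw [← integral_add_right_eq_self (fun a => K ((a - t) / h) * g a) t]
      congr 1
      funext v
      rw [add_sub_cancel_right]
    have e2 : (fun v : ℝ => K (v / h) * g (v + t))
        = fun v : ℝ => (fun u : ℝ => K u * g (t + h * u)) (v / h) := by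
      funext v
      simp only []
      rw [mul_div_cancel₀ _ hh.ne']
      ring_nf
    rw [e1, e2, MeasureTheory.Measure.integral_comp_div (fun u : ℝ => K u * g (t + h * u)) h,
      abs_of_pos hh, smul_eq_mul]
  have step2 : (1 / h) * (∫ a, K ((a - t) / h) * g a) = ∫ u, K u * g (t + h * u) := by
    rw [step1]; field_simp
  rw [step2]
  -- split
  have Isub : Integrable (fun u => K u * (g (t + h * u) - f₁ (t + h * u))) := by
    refine (Ig.sub If1).congr (Filter.Eventually.of_forall fun u => ?_)
    show K u * g (t + h * u) - K u * f₁ (t + h * u)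
        = K u * (g (t + h * u) - f₁ (t + h * u))
    ring
  have hsplit : (∫ u, K u * g (t + h * u)) - f₁ t
      = (∫ u, K u * (g (t + h * u) - f₁ (t + h * u)))
        + ((∫ u, K u * f₁ (t + h * u)) - f₁ t) := by
    have e : (fun u => K u * (g (t + h * u) - f₁ (t + h * u)))
        = fun u => K u * g (t + h * u) - K u * f₁ (t + h * u) := funext fun u => by ring
    rw [e, integral_sub Ig If1]
    ring
  have hA : |∫ u, K u * (g (t + h * u) - f₁ (t + h * u))|
      ≤ f₂ t + M2 * h ^ 2 / 2 * ∫ u, u ^ 2 * K u := by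
    have hA1 : |∫ u, K u * (g (t + h * u) - f₁ (t + h * u))|
        ≤ ∫ u, K u * f₂ (t + h * u) := by
      have h1 := norm_integral_le_integral_norm (μ := volume)
        (fun u => K u * (g (t + h * u) - f₁ (t + h * u)))
      simp only [Real.norm_eq_abs] at h1
      refine h1.trans (integral_mono Isub.abs If2 fun u => ?_)
      rw [abs_mul, abs_of_nonneg (hKnonneg u)]
      exact mul_le_mul_of_nonneg_left (hbound _) (hKnonneg u)
    have hA2 : (∫ u, K u * f₂ (t + h * u))
        ≤ f₂ t + M2 * h ^ 2 / 2 * ∫ u, u ^ 2 * K u := by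
      have := (abs_le.mp Hf2).2
      linarith
    exact hA1.trans hA2
  have hB : |(∫ u, K u * f₁ (t + h * u)) - f₁ t|
      ≤ M1 * h ^ 2 / 2 * ∫ u, u ^ 2 * K u := Hf1
  calc |(∫ u, K u * g (t + h * u)) - f₁ t|
      ≤ |∫ u, K u * (g (t + h * u) - f₁ (t + h * u))|
        + |(∫ u, K u * f₁ (t + h * u)) - f₁ t| := by
        rw [hsplit]; exact abs_add_le _ _
    _ ≤ (f₂ t + M2 * h ^ 2 / 2 * ∫ u, u ^ 2 * K u)
        + M1 * h ^ 2 / 2 * ∫ u, u ^ 2 * K u := add_le_add hA hB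
    _ = f₂ t + (M1 + M2) * (∫ u, u ^ 2 * K u) / 2 * h ^ 2 := by ring

/-- Continuous-action expected bias bound (Proposition 3, continuous case):
with observed and proposed densities `p0 > 0` and `p1 ≥ 0` on `ℝ × S`,
`ρ = p1/p0`, nonnegative rewards, estimated weights with `|rhoHat - ρ| ≤ B`
pointwise, smoothness of `a ↦ r p1` (second derivative bounded by `M1`) and of
`a ↦ B r p0` (second derivative bounded by `M2`), and a nonnegative kernel `K`
with `∫ K = 1`, vanishing first moment and second moment `κ₂`, the expected
kernel-smoothed importance sampling estimate is within
`∑_s B r p0 (t s, s) + |S| ((M1 + M2) κ₂ / 2) h²` of the counterfactual value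
`∑_s r(t s, s) p1(t s, s)`. -/
theorem stmt_10 {S : Type*} [Fintype S]
    (p0 p1 : ℝ × S → ℝ) (hp0pos : ∀ x, 0 < p0 x) (hp1nonneg : ∀ x, 0 ≤ p1 x)
    (hp0int : ∀ s : S, Integrable (fun a => p0 (a, s)))
    (hp0sum : ∑ s : S, ∫ a, p0 (a, s) = 1)
    (hp1int : ∀ s : S, Integrable (fun a => p1 (a, s)))
    (hp1sum : ∑ s : S, ∫ a, p1 (a, s) = 1)
    (t : S → ℝ) (r : ℝ × S → ℝ) (hr : ∀ x, 0 ≤ r x)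
    (rhoHat : ℝ × S → ℝ) (B : ℝ × S → ℝ) (hB : ∀ x, 0 ≤ B x)
    (hBbound : ∀ x, |rhoHat x - p1 x / p0 x| ≤ B x)
    (hmeas : ∀ s : S, Measurable (fun a => rhoHat (a, s) * r (a, s) * p0 (a, s)))
    (M1 M2 : ℝ)
    (hf1 : ∀ (s : S) (x : ℝ), DifferentiableAt ℝ (fun a => r (a, s) * p1 (a, s)) x)
    (hf1' : ∀ (s : S) (x : ℝ),
      DifferentiableAt ℝ (deriv (fun a => r (a, s) * p1 (a, s))) x)
    (hf1'' : ∀ (s : S) (x : ℝ),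
      |deriv (deriv (fun a => r (a, s) * p1 (a, s))) x| ≤ M1)
    (hf2 : ∀ (s : S) (x : ℝ),
      DifferentiableAt ℝ (fun a => B (a, s) * r (a, s) * p0 (a, s)) x)
    (hf2' : ∀ (s : S) (x : ℝ),
      DifferentiableAt ℝ (deriv (fun a => B (a, s) * r (a, s) * p0 (a, s))) x)
    (hf2'' : ∀ (s : S) (x : ℝ),
      |deriv (deriv (fun a => B (a, s) * r (a, s) * p0 (a, s))) x| ≤ M2)
    (K : ℝ → ℝ) (hKnonneg : ∀ u, 0 ≤ K u)
    (hKint : Integrable K) (hK1 : ∫ u, K u = 1)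
    (hKu : Integrable (fun u => u * K u)) (hKu0 : ∫ u, u * K u = 0)
    (hKu2 : Integrable (fun u => u ^ 2 * K u))
    (h : ℝ) (hh : 0 < h) :
    |(∑ s : S, (1 / h) * ∫ a, K ((a - t s) / h) *
          (rhoHat (a, s) * r (a, s) * p0 (a, s)))
        - ∑ s : S, r (t s, s) * p1 (t s, s)|
      ≤ (∑ s : S, B (t s, s) * r (t s, s) * p0 (t s, s))
        + (Fintype.card S : ℝ) * ((M1 + M2) * (∫ u, u ^ 2 * K u) / 2) * h ^ 2 := by
  have key : ∀ s : S,
      |(1 / h) * (∫ a, K ((a - t s) / h) * (rhoHat (a, s) * r (a, s) * p0 (a, s)))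
          - r (t s, s) * p1 (t s, s)|
        ≤ B (t s, s) * r (t s, s) * p0 (t s, s)
          + (M1 + M2) * (∫ u, u ^ 2 * K u) / 2 * h ^ 2 := by
    intro s
    have hbound : ∀ a : ℝ, |rhoHat (a, s) * r (a, s) * p0 (a, s) - r (a, s) * p1 (a, s)|
        ≤ B (a, s) * r (a, s) * p0 (a, s) := by
      intro a
      have hp0 : p0 (a, s) ≠ 0 := (hp0pos _).ne'
      have e : rhoHat (a, s) * r (a, s) * p0 (a, s) - r (a, s) * p1 (a, s)
          = (rhoHat (a, s) - p1 (a, s) / p0 (a, s)) * (r (a, s) * p0 (a, s)) := by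
        field_simp
      rw [e, abs_mul, abs_of_nonneg (mul_nonneg (hr _) (hp0pos (a, s)).le)]
      calc |rhoHat (a, s) - p1 (a, s) / p0 (a, s)| * (r (a, s) * p0 (a, s))
          ≤ B (a, s) * (r (a, s) * p0 (a, s)) :=
            mul_le_mul_of_nonneg_right (hBbound _) (mul_nonneg (hr _) (hp0pos _).le)
        _ = B (a, s) * r (a, s) * p0 (a, s) := by ring
    exact key_est K hKnonneg hKint hK1 hKu hKu0 hKu2
      (fun a => rhoHat (a, s) * r (a, s) * p0 (a, s))
      (fun a => r (a, s) * p1 (a, s))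
      (fun a => B (a, s) * r (a, s) * p0 (a, s)) (hmeas s)
      (fun a => mul_nonneg (hr _) (hp1nonneg _))
      (fun a => mul_nonneg (mul_nonneg (hB _) (hr _)) (hp0pos _).le)
      hbound M1 M2 (hf1 s) (hf1' s) (hf1'' s) (hf2 s) (hf2' s) (hf2'' s) (t s) h hh
  calc |(∑ s : S, (1 / h) * ∫ a, K ((a - t s) / h) *
          (rhoHat (a, s) * r (a, s) * p0 (a, s)))
        - ∑ s : S, r (t s, s) * p1 (t s, s)|
      = |∑ s : S, ((1 / h) * (∫ a, K ((a - t s) / h) *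
          (rhoHat (a, s) * r (a, s) * p0 (a, s))) - r (t s, s) * p1 (t s, s))| := by
        rw [Finset.sum_sub_distrib]
    _ ≤ ∑ s : S, |(1 / h) * (∫ a, K ((a - t s) / h) *
          (rhoHat (a, s) * r (a, s) * p0 (a, s))) - r (t s, s) * p1 (t s, s)| :=
        Finset.abs_sum_le_sum_abs _ _
    _ ≤ ∑ s : S, (B (t s, s) * r (t s, s) * p0 (t s, s)
          + (M1 + M2) * (∫ u, u ^ 2 * K u) / 2 * h ^ 2) :=
        Finset.sum_le_sum fun s _ => key s
    _ = (∑ s : S, B (t s, s) * r (t s, s) * p0 (t s, s))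
        + (Fintype.card S : ℝ) * ((M1 + M2) * (∫ u, u ^ 2 * K u) / 2) * h ^ 2 := by
        rw [Finset.sum_add_distrib, Finset.sum_const]
        simp only [Finset.card_univ, nsmul_eq_mul]
        ring
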